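/- Let J : M → ℝ be continuous with min J = m > 0 and α-Hölder with constant C, on a compact metric space M. Let f be β-Lipschitz, β > 1, and let x_i satisfy ρ(x_i, f^i x) ≤ γεβ^i for 0 ≤ i ≤ k−1. Then |(1/k) ln ∏_{i=0}^{k−1} J(x_i) − (1/k) ∑_{i=0}^{k−1} ln J(f^i x)| ≤ C(εγ)^α β^{kα}/(k·m·(β^α − 1)). -/

import Mathlib

lemma log_abs_sub_le_aux {m a b : ℝ} (hm : 0 < m) (ha : m ≤ a) (hb : m ≤ b) :
    |Real.log a - Real.log b| ≤ |a - b| / m := by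
  wlog h : b ≤ a generalizing a b
  · rw [abs_sub_comm, abs_sub_comm a b]; exact this hb ha (le_of_not_ge h)
  have hb0 : 0 < b := hm.trans_le hb
  have ha0 : 0 < a := hm.trans_le ha
  rw [abs_of_nonneg (sub_nonneg.2 ((Real.log_le_log_iff hb0 ha0).2 h)),
    abs_of_nonneg (sub_nonneg.2 h), ← Real.log_div (ne_of_gt ha0) (ne_of_gt hb0)]
  calc Real.log (a / b) ≤ a / b - 1 := Real.log_le_sub_one_of_pos (by positivity)
    _ = (a - b) / b := by field_simp
    _ ≤ (a - b) / m := by gcongr <;> exact sub_nonneg.2 h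

theorem stmt_3 {M : Type*} [MetricSpace M] [CompactSpace M]
    (J : M → ℝ) (hJc : Continuous J) (m : ℝ) (hm : 0 < m) (hJm : ∀ y, m ≤ J y)
    (hmin : ∃ y₀, J y₀ = m)
    (C α : ℝ) (hC : 0 < C) (hα : 0 < α)
    (hHolder : ∀ y z : M, |J y - J z| ≤ C * dist y z ^ α)
    (f : M → M) (β : ℝ) (hβ : 1 < β)
    (hf : ∀ y z : M, dist (f y) (f z) ≤ β * dist y z)
    (x : M) (k : ℕ) (hk : 0 < k) (xi : Fin k → M) (γ ε : ℝ) (hγ : 0 < γ) (hε : 0 < ε)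
    (hxi : ∀ i : Fin k, dist (xi i) (f^[(i : ℕ)] x) ≤ γ * ε * β ^ (i : ℕ)) :
    |(1 / (k : ℝ)) * Real.log (∏ i : Fin k, J (xi i)) -
        (1 / (k : ℝ)) * ∑ i : Fin k, Real.log (J (f^[(i : ℕ)] x))| ≤
      C * (ε * γ) ^ α * β ^ ((k : ℝ) * α) / ((k : ℝ) * m * (β ^ α - 1)) := by
  have hβ0 : (0:ℝ) < β := lt_trans one_pos hβ
  set r := β ^ α with hr
  have hr1 : 1 < r := Real.one_lt_rpow_iff_of_pos hβ0 |>.2 (Or.inl ⟨hβ, hα⟩)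
  have hr0 : 0 < r := lt_trans one_pos hr1
  have hk' : (0:ℝ) < k := by exact_mod_cast hk
  -- per-term bound
  have key : ∀ i : Fin k,
      |Real.log (J (xi i)) - Real.log (J (f^[(i : ℕ)] x))| ≤
        C * (ε * γ) ^ α / m * r ^ (i : ℕ) := by
    intro i
    have h1 := log_abs_sub_le_aux hm (hJm (xi i)) (hJm (f^[(i : ℕ)] x))
    have h2 := hHolder (xi i) (f^[(i : ℕ)] x)
    have hd0 : (0:ℝ) ≤ dist (xi i) (f^[(i : ℕ)] x) := dist_nonneg
    have h3 : dist (xi i) (f^[(i : ℕ)] x) ^ α ≤ (γ * ε * β ^ (i : ℕ)) ^ α :=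
      Real.rpow_le_rpow hd0 (hxi i) hα.le
    have h4 : (γ * ε * β ^ (i : ℕ)) ^ α = (ε * γ) ^ α * r ^ (i : ℕ) := by
      rw [Real.mul_rpow (by positivity) (by positivity), mul_comm γ ε,
        ← Real.rpow_natCast β i, ← Real.rpow_natCast r i, hr,
        ← Real.rpow_mul hβ0.le, ← Real.rpow_mul hβ0.le, mul_comm α]
    calc |Real.log (J (xi i)) - Real.log (J (f^[(i : ℕ)] x))|
        ≤ |J (xi i) - J (f^[(i : ℕ)] x)| / m := h1
      _ ≤ C * (γ * ε * β ^ (i : ℕ)) ^ α / m := by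
          gcongr
          exact h2.trans (mul_le_mul_of_nonneg_left h3 hC.le)
      _ = C * (ε * γ) ^ α / m * r ^ (i : ℕ) := by rw [h4]; ring
  -- rewrite log of product as sum
  have hlog : Real.log (∏ i : Fin k, J (xi i)) = ∑ i : Fin k, Real.log (J (xi i)) :=
    Real.log_prod (fun i _ => ne_of_gt (lt_of_lt_of_le hm (hJm _)))
  have hsum : ∑ i : Fin k, (r:ℝ) ^ (i : ℕ) ≤ r ^ (k:ℕ) / (r - 1) := by
    rw [Fin.sum_univ_eq_sum_range (fun i => (r:ℝ) ^ i), geom_sum_eq (ne_of_gt hr1)]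
    gcongr
    all_goals linarith
  have hrk : (r:ℝ) ^ (k:ℕ) = β ^ ((k:ℝ) * α) := by
    rw [← Real.rpow_natCast r k, hr, ← Real.rpow_mul hβ0.le, mul_comm α]
  calc |(1 / (k : ℝ)) * Real.log (∏ i : Fin k, J (xi i)) -
        (1 / (k : ℝ)) * ∑ i : Fin k, Real.log (J (f^[(i : ℕ)] x))|
      = (1 / (k:ℝ)) * |∑ i : Fin k,
          (Real.log (J (xi i)) - Real.log (J (f^[(i : ℕ)] x)))| := by
        rw [hlog, ← mul_sub, ← Finset.sum_sub_distrib, abs_mul,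
          abs_of_pos (by positivity : (0:ℝ) < 1 / (k:ℝ))]
    _ ≤ (1 / (k:ℝ)) * ∑ i : Fin k, (C * (ε * γ) ^ α / m * r ^ (i : ℕ)) := by
        apply mul_le_mul_of_nonneg_left _ (by positivity)
        exact le_trans (Finset.abs_sum_le_sum_abs _ _) (Finset.sum_le_sum fun i _ => key i)
    _ = (1 / (k:ℝ)) * (C * (ε * γ) ^ α / m) * ∑ i : Fin k, (r:ℝ) ^ (i : ℕ) := by
        rw [← Finset.mul_sum]; ring
    _ ≤ (1 / (k:ℝ)) * (C * (ε * γ) ^ α / m) * (r ^ (k:ℕ) / (r - 1)) := by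
        apply mul_le_mul_of_nonneg_left hsum (by positivity)
    _ = C * (ε * γ) ^ α * β ^ ((k : ℝ) * α) / ((k : ℝ) * m * (β ^ α - 1)) := by
        rw [hrk, hr]
        field_simp
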